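/- Let p and q be coprime positive integers. Then 12·∑_{n ∈ S} n = 4pq(p−1)(q−1) + (p−1)(q−1)(p+q+1); equivalently, ∑_{n ∈ S} n = (1/3)pq(p−1)(q−1) + (1/12)(p−1)(q−1)(p+q+1). -/

import Mathlib

open scoped Classical

section MordellAux

variable {p q : ℤ}


lemma icc_insert (n : ℤ) (h : 0 ≤ n) :
    Finset.Icc (1:ℤ) (n+1) = insert (n+1) (Finset.Icc 1 n) := by
  ext t; simp [Finset.mem_Icc, Finset.mem_insert]; omega

lemma sum_icc_id (n : ℤ) (h : 0 ≤ n) : 2 * ∑ i ∈ Finset.Icc (1:ℤ) n, i = n * (n+1) := by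
  refine Int.le_induction (motive := fun n _ => 2 * ∑ i ∈ Finset.Icc (1:ℤ) n, i = n * (n+1)) ?_ ?_ n h
  · simp
  · intro n hn ih
    rw [icc_insert n hn, Finset.sum_insert (by simp)]
    ring_nf; ring_nf at ih; omega

lemma ico_insert (n : ℤ) (h : 0 ≤ n) :
    Finset.Ico (0:ℤ) (n+1) = insert n (Finset.Ico 0 n) := by
  ext t; simp [Finset.mem_Ico, Finset.mem_insert]; omega

lemma sum_ico_id (n : ℤ) (h : 0 ≤ n) : 2 * ∑ i ∈ Finset.Ico (0:ℤ) n, i = n * (n-1) := by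
  refine Int.le_induction (motive := fun n _ => 2 * ∑ i ∈ Finset.Ico (0:ℤ) n, i = n * (n-1)) ?_ ?_ n h
  · simp
  · intro n hn ih
    rw [ico_insert n hn, Finset.sum_insert (by simp)]
    ring_nf; ring_nf at ih; omega

lemma sum_ico_sq (n : ℤ) (h : 0 ≤ n) :
    6 * ∑ i ∈ Finset.Ico (0:ℤ) n, i^2 = n * (n-1) * (2*n-1) := by
  refine Int.le_induction (motive := fun n _ => 6 * ∑ i ∈ Finset.Ico (0:ℤ) n, i^2 = n * (n-1) * (2*n-1)) ?_ ?_ n h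
  · simp
  · intro n hn ih
    rw [ico_insert n hn, Finset.sum_insert (by simp)]
    nlinarith [ih]



lemma not_dvd (hp : 0 < p) (hpq : IsCoprime p q) {x : ℤ} (hx0 : 0 < x) (hxp : x < p) :
    ¬ (p ∣ q * x) := by
  intro hdvd
  have h2 : p ∣ x := hpq.dvd_of_dvd_mul_left hdvd
  have := Int.le_of_dvd hx0 h2
  omega

lemma g_nonneg (hp : 0 < p) (hq : 0 < q) {x : ℤ} (hx0 : 0 < x) : 0 ≤ q * x / p :=
  Int.ediv_nonneg (by positivity) hp.le

lemma g_le (hp : 0 < p) (hq : 0 < q) {x : ℤ} (hxp : x < p) : q * x / p ≤ q - 1 := by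
  have : q * x / p < q := by
    rw [Int.ediv_lt_iff_lt_mul hp]
    nlinarith
  omega

lemma g_reflect (hp : 0 < p) (hq : 0 < q) (hpq : IsCoprime p q) {x : ℤ}
    (hx0 : 0 < x) (hxp : x < p) : q * (p - x) / p = q - 1 - q * x / p := by
  have hnd := not_dvd hp hpq hx0 hxp
  have hd : p * (q * x / p) + q * x % p = q * x := Int.mul_ediv_add_emod _ _
  have hr0 : 0 ≤ q * x % p := Int.emod_nonneg _ (ne_of_gt hp)
  have hrp : q * x % p < p := Int.emod_lt_of_pos _ hp
  have hrne : q * x % p ≠ 0 := fun h => hnd (Int.dvd_of_emod_eq_zero h)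
  have hr1 : 0 < q * x % p := lt_of_le_of_ne hr0 (Ne.symm hrne)
  refine le_antisymm ?_ ?_
  · have := (Int.ediv_lt_iff_lt_mul hp (a := q * (p - x)) (b := q - q * x / p)).2 (by nlinarith)
    omega
  · exact (Int.le_ediv_iff_mul_le hp).2 (by nlinarith)

lemma Tx_eq (hp : 0 < p) (hq : 0 < q) {x : ℤ} (hx0 : 0 < x) (hxp : x < p) :
    (Finset.Ioo (0:ℤ) q).filter (fun y => q * x + p * y < p * q)
      = Finset.Icc 1 (q - 1 - q * x / p) := by
  have hg0 : 0 ≤ q * x / p := g_nonneg hp hq hx0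
  ext y
  simp only [Finset.mem_filter, Finset.mem_Ioo, Finset.mem_Icc]
  constructor
  · rintro ⟨⟨hy0, hyq⟩, hlt⟩
    have : q * x / p < q - y := by
      rw [Int.ediv_lt_iff_lt_mul hp]; nlinarith
    omega
  · rintro ⟨hy1, hy2⟩
    have h1 : q * x < (q * x / p + 1) * p := Int.lt_ediv_add_one_mul_self _ hp
    have h2 : (q * x / p + 1) * p ≤ (q - y) * p := by
      have : q * x / p + 1 ≤ q - y := by omega
      exact mul_le_mul_of_nonneg_right this hp.le
    refine ⟨⟨by omega, by omega⟩, by nlinarith⟩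

lemma Dx_eq (hp : 0 < p) (hq : 0 < q) {x : ℤ} (hx0 : 0 < x) (hxp : x < p) :
    (Finset.Ioo (0:ℤ) q).filter (fun y => q * x < p * y)
      = Finset.Ioo (q * x / p) q := by
  have hg0 : 0 ≤ q * x / p := g_nonneg hp hq hx0
  ext y
  simp only [Finset.mem_filter, Finset.mem_Ioo]
  constructor
  · rintro ⟨⟨hy0, hyq⟩, hlt⟩
    refine ⟨?_, hyq⟩
    rw [Int.ediv_lt_iff_lt_mul hp]; nlinarith
  · rintro ⟨hy1, hy2⟩
    have h1 : q * x < (q * x / p + 1) * p := Int.lt_ediv_add_one_mul_self _ hp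
    refine ⟨⟨by omega, hy2⟩, by nlinarith⟩

lemma D'x_eq (hp : 0 < p) (hq : 0 < q) {x : ℤ} (hx0 : 0 < x) (hxp : x < p) :
    (Finset.Ioo (0:ℤ) q).filter (fun y => ¬ (q * x < p * y))
      = Finset.Icc 1 (q * x / p) := by
  have hgq : q * x / p ≤ q - 1 := g_le hp hq hxp
  ext y
  simp only [Finset.mem_filter, Finset.mem_Ioo, Finset.mem_Icc, not_lt]
  constructor
  · rintro ⟨⟨hy0, hyq⟩, hle⟩
    exact ⟨by omega, (Int.le_ediv_iff_mul_le hp).2 (by nlinarith)⟩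
  · rintro ⟨hy1, hy2⟩
    have : y * p ≤ q * x := (Int.le_ediv_iff_mul_le hp).1 hy2
    exact ⟨⟨by omega, by omega⟩, by nlinarith⟩



lemma stepA (hp : 0 < p) (hq : 0 < q) (hpq : IsCoprime p q) :
    ∑ n ∈ (Finset.Icc (1 : ℤ) (p * q - 1)).filter
        (fun n => ∃ x y : ℤ, 0 < x ∧ x < p ∧ 0 < y ∧ y < q ∧ n = q * x + p * y), n
      = ∑ z ∈ (Finset.Ioo (0:ℤ) p ×ˢ Finset.Ioo (0:ℤ) q).filter
          (fun z => q * z.1 + p * z.2 < p * q), (q * z.1 + p * z.2) := by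
  have hset : (Finset.Icc (1 : ℤ) (p * q - 1)).filter
        (fun n => ∃ x y : ℤ, 0 < x ∧ x < p ∧ 0 < y ∧ y < q ∧ n = q * x + p * y)
      = ((Finset.Ioo (0:ℤ) p ×ˢ Finset.Ioo (0:ℤ) q).filter
          (fun z => q * z.1 + p * z.2 < p * q)).image (fun z => q * z.1 + p * z.2) := by
    ext n
    simp only [Finset.mem_filter, Finset.mem_Icc, Finset.mem_image, Finset.mem_product,
      Finset.mem_Ioo]
    constructor
    · rintro ⟨⟨hn1, hn2⟩, x, y, hx0, hxp, hy0, hyq, hn⟩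
      refine ⟨(x, y), ⟨⟨⟨hx0, hxp⟩, ⟨hy0, hyq⟩⟩, ?_⟩, ?_⟩ <;> dsimp only <;> omega
    · rintro ⟨⟨x, y⟩, ⟨⟨⟨hx0, hxp⟩, ⟨hy0, hyq⟩⟩, hlt⟩, hn⟩
      dsimp only at hlt hn
      have h1 : q ≤ q * x := le_mul_of_one_le_right hq.le (by omega)
      have h2 : p ≤ p * y := le_mul_of_one_le_right hp.le (by omega)
      exact ⟨⟨by omega, by omega⟩, x, y, hx0, hxp, hy0, hyq, by omega⟩
  rw [hset, Finset.sum_image ?_]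
  intro z hz z' hz' hf
  simp only [Finset.mem_coe, Finset.mem_filter, Finset.mem_product, Finset.mem_Ioo] at hz hz'
  obtain ⟨⟨⟨hx0, hxp⟩, hy0, hyq⟩, -⟩ := hz
  obtain ⟨⟨⟨hx0', hxp'⟩, hy0', hyq'⟩, -⟩ := hz'
  have hdvd : p ∣ q * (z.1 - z'.1) := ⟨z'.2 - z.2, by linarith [hf]; ⟩
  have hdx : p ∣ (z.1 - z'.1) := hpq.dvd_of_dvd_mul_left hdvd
  have hx : z.1 - z'.1 = 0 := by
    refine Int.eq_zero_of_dvd_of_natAbs_lt_natAbs hdx ?_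
    omega
  have hy : z.2 = z'.2 := by
    have h1 : z.1 = z'.1 := by omega
    simp only [h1] at hf
    have hp0 : p ≠ 0 := ne_of_gt hp
    have := mul_left_cancel₀ hp0 (by omega : p * z.2 = p * z'.2)
    exact this
  exact Prod.ext (by omega) hy



lemma B1 (hp : 0 < p) (hq : 0 < q) {x : ℤ} (hx0 : 0 < x) (hxp : x < p) :
    12 * ∑ y ∈ (Finset.Ioo (0:ℤ) q).filter (fun y => q * x + p * y < p * q),
        (q * x + p * y)
      = 12 * (q * x) * (q - 1 - q * x / p)
        + 6 * p * ((q - 1 - q * x / p) * (q - q * x / p)) := by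
  rw [Tx_eq hp hq hx0 hxp]
  set g := q * x / p with hg
  have hg0 : 0 ≤ g := g_nonneg hp hq hx0
  have hgq : g ≤ q - 1 := g_le hp hq hxp
  have hcard : ((Finset.Icc (1:ℤ) (q-1-g)).card : ℤ) = q - 1 - g := by
    rw [Int.card_Icc]; omega
  have hsum := sum_icc_id (q-1-g) (by omega)
  rw [Finset.sum_add_distrib, Finset.sum_const, ← Finset.mul_sum, nsmul_eq_mul, hcard]
  linear_combination 6 * p * hsum

lemma B2 (hp : 0 < p) (hq : 0 < q) {x : ℤ} (hx0 : 0 < x) (hxp : x < p) :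
    12 * ∑ y ∈ Finset.Ioo (0:ℤ) q, min (q * x) (p * y)
      = 12 * (q * x) * (q - 1 - q * x / p)
        + 6 * p * ((q * x / p) * (q * x / p + 1)) := by
  set g := q * x / p with hg
  have hg0 : 0 ≤ g := g_nonneg hp hq hx0
  have hgq : g ≤ q - 1 := g_le hp hq hxp
  rw [← Finset.sum_filter_add_sum_filter_not (Finset.Ioo (0:ℤ) q) (fun y => q * x < p * y)]
  have e1 : ∑ y ∈ (Finset.Ioo (0:ℤ) q).filter (fun y => q * x < p * y),
      min (q * x) (p * y) = ∑ y ∈ Finset.Ioo g q, (q * x) := by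
    rw [← Dx_eq hp hq hx0 hxp]
    refine Finset.sum_congr rfl fun y hy => ?_
    simp only [Finset.mem_filter] at hy
    exact min_eq_left (le_of_lt hy.2)
  have e2 : ∑ y ∈ (Finset.Ioo (0:ℤ) q).filter (fun y => ¬ (q * x < p * y)),
      min (q * x) (p * y) = ∑ y ∈ Finset.Icc 1 g, (p * y) := by
    rw [← D'x_eq hp hq hx0 hxp]
    refine Finset.sum_congr rfl fun y hy => ?_
    simp only [Finset.mem_filter, not_lt] at hy
    exact min_eq_right hy.2
  have hcard : ((Finset.Ioo (g:ℤ) q).card : ℤ) = q - g - 1 := by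
    rw [Int.card_Ioo]; omega
  have hsum := sum_icc_id g (by omega)
  rw [e1, e2, Finset.sum_const, ← Finset.mul_sum, nsmul_eq_mul, hcard]
  linear_combination 6 * p * hsum

lemma B3 (hp : 0 < p) (hq : 0 < q) (hpq : IsCoprime p q) :
    ∑ x ∈ Finset.Ioo (0:ℤ) p, ((q - 1 - q * x / p) * (q - q * x / p))
      = ∑ x ∈ Finset.Ioo (0:ℤ) p, ((q * x / p) * (q * x / p + 1)) := by
  refine Finset.sum_nbij' (fun x => p - x) (fun x => p - x) ?_ ?_ ?_ ?_ ?_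
  · intro a ha; simp only [Finset.mem_Ioo] at *; omega
  · intro a ha; simp only [Finset.mem_Ioo] at *; omega
  · intro a ha; omega
  · intro a ha; omega
  · intro a ha
    simp only [Finset.mem_Ioo] at ha
    rw [g_reflect hp hq hpq ha.1 ha.2]
    ring



lemma stepB (hp : 0 < p) (hq : 0 < q) (hpq : IsCoprime p q) :
    12 * ∑ z ∈ (Finset.Ioo (0:ℤ) p ×ˢ Finset.Ioo (0:ℤ) q).filter
          (fun z => q * z.1 + p * z.2 < p * q), (q * z.1 + p * z.2)
      = 12 * ∑ z ∈ Finset.Ioo (0:ℤ) p ×ˢ Finset.Ioo (0:ℤ) q,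
          min (q * z.1) (p * z.2) := by
  rw [Finset.sum_filter, Finset.sum_product, Finset.sum_product,
    Finset.mul_sum, Finset.mul_sum]
  have L : ∑ x ∈ Finset.Ioo (0:ℤ) p,
        (12 * ∑ y ∈ Finset.Ioo (0:ℤ) q,
          (if q * x + p * y < p * q then q * x + p * y else 0))
      = ∑ x ∈ Finset.Ioo (0:ℤ) p,
        (12 * (q * x) * (q - 1 - q * x / p)
          + 6 * p * ((q - 1 - q * x / p) * (q - q * x / p))) := by
    refine Finset.sum_congr rfl fun x hx => ?_
    simp only [Finset.mem_Ioo] at hx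
    rw [← Finset.sum_filter]
    exact B1 hp hq hx.1 hx.2
  have R : ∑ x ∈ Finset.Ioo (0:ℤ) p,
        (12 * ∑ y ∈ Finset.Ioo (0:ℤ) q, min (q * x) (p * y))
      = ∑ x ∈ Finset.Ioo (0:ℤ) p,
        (12 * (q * x) * (q - 1 - q * x / p)
          + 6 * p * ((q * x / p) * (q * x / p + 1))) := by
    refine Finset.sum_congr rfl fun x hx => ?_
    simp only [Finset.mem_Ioo] at hx
    exact B2 hp hq hx.1 hx.2
  rw [L, R, Finset.sum_add_distrib, Finset.sum_add_distrib,
    ← Finset.mul_sum, ← Finset.mul_sum, B3 hp hq hpq]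

lemma cnt_eq (hp : 0 < p) (hq : 0 < q) {t : ℤ} (ht1 : 1 ≤ t) (ht2 : t ≤ p * q - 1) :
    ∑ x ∈ Finset.Ioo (0:ℤ) p, (if t ≤ q * x then (1:ℤ) else 0)
      = p - 1 - (t - 1) / q := by
  have hkey : ∀ x : ℤ, (t ≤ q * x ↔ (t - 1) / q < x) := by
    intro x
    rw [Int.ediv_lt_iff_lt_mul hq]
    constructor <;> intro h <;> nlinarith
  have hd0 : 0 ≤ (t - 1) / q := Int.ediv_nonneg (by omega) hq.le
  have hdp : (t - 1) / q < p := by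
    rw [Int.ediv_lt_iff_lt_mul hq]; nlinarith
  have hfe : (Finset.Ioo (0:ℤ) p).filter (fun x => t ≤ q * x)
      = Finset.Ico ((t - 1) / q + 1) p := by
    ext x
    simp only [Finset.mem_filter, Finset.mem_Ioo, Finset.mem_Ico, hkey]
    omega
  rw [Finset.sum_boole, hfe, Int.card_Ico, Int.toNat_of_nonneg (by omega)]
  ring



lemma min_expand {N a b : ℤ} (ha1 : 1 ≤ a) (haN : a ≤ N) (hb1 : 1 ≤ b) (hbN : b ≤ N) :
    min a b = ∑ t ∈ Finset.Icc (1:ℤ) N,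
      ((if t ≤ a then (1:ℤ) else 0) * (if t ≤ b then (1:ℤ) else 0)) := by
  have h1 : ∀ t : ℤ, ((if t ≤ a then (1:ℤ) else 0) * (if t ≤ b then (1:ℤ) else 0))
      = (if t ≤ min a b then (1:ℤ) else 0) := by
    intro t
    by_cases h1 : t ≤ a <;> by_cases h2 : t ≤ b <;>
      simp [h1, h2, le_min_iff]
  rw [Finset.sum_congr rfl (fun t _ => h1 t), Finset.sum_boole]
  have hfe : (Finset.Icc (1:ℤ) N).filter (fun t => t ≤ min a b)
      = Finset.Icc 1 (min a b) := by
    ext t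
    simp only [Finset.mem_filter, Finset.mem_Icc, le_min_iff]
    omega
  rw [hfe, Int.card_Icc, Int.toNat_of_nonneg (by omega)]
  ring

lemma stepC (hp : 0 < p) (hq : 0 < q) :
    ∑ z ∈ Finset.Ioo (0:ℤ) p ×ˢ Finset.Ioo (0:ℤ) q, min (q * z.1) (p * z.2)
      = ∑ t ∈ Finset.Icc (1:ℤ) (p * q - 1),
          ((p - 1 - (t - 1) / q) * (q - 1 - (t - 1) / p)) := by
  rw [Finset.sum_product]
  have e1 : ∀ x ∈ Finset.Ioo (0:ℤ) p, ∀ y ∈ Finset.Ioo (0:ℤ) q,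
      min (q * x) (p * y) = ∑ t ∈ Finset.Icc (1:ℤ) (p * q - 1),
        ((if t ≤ q * x then (1:ℤ) else 0) * (if t ≤ p * y then (1:ℤ) else 0)) := by
    intro x hx y hy
    simp only [Finset.mem_Ioo] at hx hy
    refine min_expand ?_ ?_ ?_ ?_ <;> nlinarith [hx.1, hx.2, hy.1, hy.2]
  calc ∑ x ∈ Finset.Ioo (0:ℤ) p, ∑ y ∈ Finset.Ioo (0:ℤ) q, min (q * x) (p * y)
      = ∑ x ∈ Finset.Ioo (0:ℤ) p, ∑ y ∈ Finset.Ioo (0:ℤ) q,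
          ∑ t ∈ Finset.Icc (1:ℤ) (p * q - 1),
            ((if t ≤ q * x then (1:ℤ) else 0) * (if t ≤ p * y then (1:ℤ) else 0)) := by
        refine Finset.sum_congr rfl fun x hx => Finset.sum_congr rfl fun y hy => e1 x hx y hy
    _ = ∑ t ∈ Finset.Icc (1:ℤ) (p * q - 1), ∑ x ∈ Finset.Ioo (0:ℤ) p,
          ∑ y ∈ Finset.Ioo (0:ℤ) q,
            ((if t ≤ q * x then (1:ℤ) else 0) * (if t ≤ p * y then (1:ℤ) else 0)) := by
        rw [Finset.sum_congr rfl fun x (_ : x ∈ Finset.Ioo (0:ℤ) p) => Finset.sum_comm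
          (s := Finset.Ioo (0:ℤ) q) (t := Finset.Icc (1:ℤ) (p * q - 1))
          (f := fun y t => (if t ≤ q * x then (1:ℤ) else 0) * (if t ≤ p * y then (1:ℤ) else 0)),
          Finset.sum_comm]
    _ = ∑ t ∈ Finset.Icc (1:ℤ) (p * q - 1),
          ((p - 1 - (t - 1) / q) * (q - 1 - (t - 1) / p)) := by
        refine Finset.sum_congr rfl fun t ht => ?_
        simp only [Finset.mem_Icc] at ht
        rw [← Finset.sum_mul_sum]
        rw [cnt_eq hp hq ht.1 ht.2, cnt_eq hq hp ht.1 (by rw [mul_comm]; exact ht.2)]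


lemma decomp (hp : 0 < p) (hq : 0 < q) (F : ℤ → ℤ) :
    ∑ s ∈ Finset.Ico (0:ℤ) (p * q), F s
      = ∑ z ∈ Finset.Ico (0:ℤ) q ×ˢ Finset.Ico (0:ℤ) p, F (p * z.1 + z.2) := by
  refine Finset.sum_nbij' (fun s => (s / p, s % p)) (fun z => p * z.1 + z.2) ?_ ?_ ?_ ?_ ?_
  · intro s hs
    simp only [Finset.mem_Ico, Finset.mem_product] at *
    refine ⟨⟨Int.ediv_nonneg hs.1 hp.le, ?_⟩, Int.emod_nonneg _ (ne_of_gt hp),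
      Int.emod_lt_of_pos _ hp⟩
    rw [Int.ediv_lt_iff_lt_mul hp]
    nlinarith [hs.2]
  · intro z hz
    simp only [Finset.mem_Ico, Finset.mem_product] at *
    obtain ⟨⟨h1, h2⟩, h3, h4⟩ := hz
    constructor
    · nlinarith
    · nlinarith
  · intro s hs
    dsimp only
    exact Int.mul_ediv_add_emod s p
  · intro z hz
    simp only [Finset.mem_Ico, Finset.mem_product] at hz
    obtain ⟨⟨h1, h2⟩, h3, h4⟩ := hz
    have hdiv : (p * z.1 + z.2) / p = z.1 := by
      rw [add_comm, Int.add_mul_ediv_left _ _ (ne_of_gt hp),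
        Int.ediv_eq_zero_of_lt h3 h4]
      omega
    have hmod : (p * z.1 + z.2) % p = z.2 := by
      rw [add_comm, Int.add_mul_emod_self_left, Int.emod_eq_of_lt h3 h4]
    rw [hdiv, hmod]
  · intro s hs
    rw [Int.mul_ediv_add_emod s p]

lemma e_mod (hp : 0 < p) (hq : 0 < q) :
    ∑ s ∈ Finset.Ico (0:ℤ) (p * q), (s % p) = q * ∑ u ∈ Finset.Ico (0:ℤ) p, u := by
  rw [decomp hp hq, Finset.sum_product]
  have e1 : ∀ j ∈ Finset.Ico (0:ℤ) q, ∀ u ∈ Finset.Ico (0:ℤ) p,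
      (p * j + u) % p = u := by
    intro j hj u hu
    simp only [Finset.mem_Ico] at hu
    rw [add_comm, Int.add_mul_emod_self_left, Int.emod_eq_of_lt hu.1 hu.2]
  calc ∑ j ∈ Finset.Ico (0:ℤ) q, ∑ u ∈ Finset.Ico (0:ℤ) p, (p * j + u) % p
      = ∑ j ∈ Finset.Ico (0:ℤ) q, ∑ u ∈ Finset.Ico (0:ℤ) p, u :=
        Finset.sum_congr rfl fun j hj => Finset.sum_congr rfl fun u hu => e1 j hj u hu
    _ = q * ∑ u ∈ Finset.Ico (0:ℤ) p, u := by
        rw [Finset.sum_const, nsmul_eq_mul, Int.card_Ico]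
        congr 1
        omega

lemma e_smod (hp : 0 < p) (hq : 0 < q) :
    ∑ s ∈ Finset.Ico (0:ℤ) (p * q), s * (s % p)
      = p * (∑ j ∈ Finset.Ico (0:ℤ) q, j) * (∑ u ∈ Finset.Ico (0:ℤ) p, u)
        + q * ∑ u ∈ Finset.Ico (0:ℤ) p, u ^ 2 := by
  rw [decomp hp hq, Finset.sum_product]
  have e1 : ∀ j ∈ Finset.Ico (0:ℤ) q, ∀ u ∈ Finset.Ico (0:ℤ) p,
      (p * j + u) * ((p * j + u) % p) = p * j * u + u ^ 2 := by
    intro j hj u hu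
    simp only [Finset.mem_Ico] at hu
    rw [add_comm, Int.add_mul_emod_self_left, Int.emod_eq_of_lt hu.1 hu.2]
    ring
  calc ∑ j ∈ Finset.Ico (0:ℤ) q, ∑ u ∈ Finset.Ico (0:ℤ) p, (p * j + u) * ((p * j + u) % p)
      = ∑ j ∈ Finset.Ico (0:ℤ) q, ∑ u ∈ Finset.Ico (0:ℤ) p, (p * j * u + u ^ 2) :=
        Finset.sum_congr rfl fun j hj => Finset.sum_congr rfl fun u hu => e1 j hj u hu
    _ = p * (∑ j ∈ Finset.Ico (0:ℤ) q, j) * (∑ u ∈ Finset.Ico (0:ℤ) p, u)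
        + q * ∑ u ∈ Finset.Ico (0:ℤ) p, u ^ 2 := by
        simp only [Finset.sum_add_distrib]
        congr 1
        · have h1 : ∀ j ∈ Finset.Ico (0:ℤ) q, ∑ u ∈ Finset.Ico (0:ℤ) p, (p * j * u)
              = p * j * ∑ u ∈ Finset.Ico (0:ℤ) p, u := fun j _ => by rw [Finset.mul_sum]
          calc ∑ j ∈ Finset.Ico (0:ℤ) q, ∑ u ∈ Finset.Ico (0:ℤ) p, (p * j * u)
              = ∑ j ∈ Finset.Ico (0:ℤ) q, (p * j * ∑ u ∈ Finset.Ico (0:ℤ) p, u) :=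
                Finset.sum_congr rfl h1
            _ = (∑ j ∈ Finset.Ico (0:ℤ) q, p * j) * (∑ u ∈ Finset.Ico (0:ℤ) p, u) := by
                rw [← Finset.sum_mul]
            _ = p * (∑ j ∈ Finset.Ico (0:ℤ) q, j) * (∑ u ∈ Finset.Ico (0:ℤ) p, u) := by
                rw [← Finset.mul_sum]
        · rw [Finset.sum_const, nsmul_eq_mul, Int.card_Ico]
          congr 1
          omega


lemma e_crt (hp : 0 < p) (hq : 0 < q) (hpq : IsCoprime p q) :
    ∑ s ∈ Finset.Ico (0:ℤ) (p * q), (s % p) * (s % q)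
      = (∑ u ∈ Finset.Ico (0:ℤ) p, u) * (∑ v ∈ Finset.Ico (0:ℤ) q, v) := by
  obtain ⟨a, b, hab⟩ := hpq
  have hpq0 : 0 < p * q := by positivity
  rw [Finset.sum_mul_sum, ← Finset.sum_product']
  refine Finset.sum_nbij' (fun s => (s % p, s % q))
    (fun z => (z.2 * a * p + z.1 * b * q) % (p * q)) ?_ ?_ ?_ ?_ ?_
  · intro s hs
    simp only [Finset.mem_Ico, Finset.mem_product]
    exact ⟨⟨Int.emod_nonneg _ (ne_of_gt hp), Int.emod_lt_of_pos _ hp⟩,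
      Int.emod_nonneg _ (ne_of_gt hq), Int.emod_lt_of_pos _ hq⟩
  · intro z hz
    simp only [Finset.mem_Ico]
    exact ⟨Int.emod_nonneg _ (ne_of_gt hpq0), Int.emod_lt_of_pos _ hpq0⟩
  · intro s hs
    simp only [Finset.mem_Ico] at hs
    dsimp only
    have hd : p * q ∣ s - (s % q * a * p + s % p * b * q) := by
      refine ⟨a * (s / q) + b * (s / p), ?_⟩
      rw [Int.emod_def s q, Int.emod_def s p]
      linear_combination (-s) * hab
    have hX : (s % q * a * p + s % p * b * q) % (p * q) = s % (p * q) :=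
      Int.modEq_iff_dvd.2 hd
    rw [hX, Int.emod_eq_of_lt hs.1 hs.2]
  · intro z hz
    simp only [Finset.mem_Ico, Finset.mem_product] at hz
    obtain ⟨⟨h1, h2⟩, h3, h4⟩ := hz
    have hp_dvd : (p:ℤ) ∣ p * q := ⟨q, rfl⟩
    have hq_dvd : (q:ℤ) ∣ p * q := ⟨p, mul_comm p q⟩
    have e1 : (z.2 * a * p + z.1 * b * q) % (p * q) % p = z.1 := by
      rw [Int.emod_emod_of_dvd _ hp_dvd]
      have hmeq : (z.2 * a * p + z.1 * b * q) % p = z.1 % p :=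
        Int.modEq_iff_dvd.2 ⟨-(a * (z.2 - z.1)), by linear_combination (-z.1) * hab⟩
      rw [hmeq, Int.emod_eq_of_lt h1 h2]
    have e2 : (z.2 * a * p + z.1 * b * q) % (p * q) % q = z.2 := by
      rw [Int.emod_emod_of_dvd _ hq_dvd]
      have hmeq : (z.2 * a * p + z.1 * b * q) % q = z.2 % q :=
        Int.modEq_iff_dvd.2 ⟨-(b * (z.1 - z.2)), by linear_combination (-z.2) * hab⟩
      rw [hmeq, Int.emod_eq_of_lt h3 h4]
    exact Prod.ext e1 e2
  · intro s hs
    rfl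




lemma stepD (hp : 0 < p) (hq : 0 < q) :
    ∑ t ∈ Finset.Icc (1:ℤ) (p * q - 1), ((p - 1 - (t - 1) / q) * (q - 1 - (t - 1) / p))
      = ∑ s ∈ Finset.Ico (0:ℤ) (p * q), ((p - 1 - s / q) * (q - 1 - s / p)) := by
  have h1 : ∑ t ∈ Finset.Icc (1:ℤ) (p * q - 1),
        ((p - 1 - (t - 1) / q) * (q - 1 - (t - 1) / p))
      = ∑ s ∈ Finset.Ico (0:ℤ) (p * q - 1), ((p - 1 - s / q) * (q - 1 - s / p)) := by
    refine Finset.sum_nbij' (fun t => t - 1) (fun s => s + 1) ?_ ?_ ?_ ?_ ?_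
    · intro t ht; simp only [Finset.mem_Icc, Finset.mem_Ico] at *; omega
    · intro s hs; simp only [Finset.mem_Icc, Finset.mem_Ico] at *; omega
    · intro t ht; omega
    · intro s hs; omega
    · intro t ht; rfl
  have hq1 : (p * q - 1) / q = p - 1 := by
    have : p * q - 1 = (q - 1) + q * (p - 1) := by ring
    rw [this, Int.add_mul_ediv_left _ _ (ne_of_gt hq), Int.ediv_eq_zero_of_lt (by omega) (by omega)]
    omega
  have hp1 : (p * q - 1) / p = q - 1 := by
    have : p * q - 1 = (p - 1) + p * (q - 1) := by ring
    rw [this, Int.add_mul_ediv_left _ _ (ne_of_gt hp), Int.ediv_eq_zero_of_lt (by omega) (by omega)]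
    omega
  have h2 : Finset.Ico (0:ℤ) (p * q) = insert (p * q - 1) (Finset.Ico 0 (p * q - 1)) := by
    have := ico_insert (p * q - 1) (by nlinarith)
    rwa [show p * q - 1 + 1 = p * q by ring] at this
  rw [h1, h2, Finset.sum_insert (by simp), hq1, hp1]
  simp


lemma stepE (hp : 0 < p) (hq : 0 < q) (hpq : IsCoprime p q) :
    p * q * (12 * ∑ s ∈ Finset.Ico (0:ℤ) (p * q), ((p - 1 - s / q) * (q - 1 - s / p)))
      = p * q * (4 * p * q * (p - 1) * (q - 1) + (p - 1) * (q - 1) * (p + q + 1)) := by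
  have hN : (0:ℤ) < p * q := by positivity
  have hcard : ((Finset.Ico (0:ℤ) (p * q)).card : ℤ) = p * q := by
    rw [Int.card_Ico]; omega
  have key : ∀ s ∈ Finset.Ico (0:ℤ) (p * q),
      p * q * ((p - 1 - s / q) * (q - 1 - s / p))
        = q * (p-1) * (p * (q-1))
          + (-(q * (p-1)) - p * (q-1)) * s
          + q * (p-1) * (s % p)
          + p * (q-1) * (s % q)
          + s^2
          - s * (s % p)
          - s * (s % q)
          + (s % p) * (s % q) := by
    intro s _
    rw [Int.emod_def s p, Int.emod_def s q]
    ring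
  have h0 : p * q * (12 * ∑ s ∈ Finset.Ico (0:ℤ) (p * q), ((p - 1 - s / q) * (q - 1 - s / p)))
      = 12 * ∑ s ∈ Finset.Ico (0:ℤ) (p * q),
          (p * q * ((p - 1 - s / q) * (q - 1 - s / p))) := by
    rw [← Finset.mul_sum]; ring
  rw [h0, Finset.sum_congr rfl key]
  have hsplit : ∑ s ∈ Finset.Ico (0:ℤ) (p * q),
      (q * (p-1) * (p * (q-1))
          + (-(q * (p-1)) - p * (q-1)) * s
          + q * (p-1) * (s % p)
          + p * (q-1) * (s % q)
          + s^2
          - s * (s % p)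
          - s * (s % q)
          + (s % p) * (s % q))
      = (q * (p-1) * (p * (q-1))) * (p * q)
        + (-(q * (p-1)) - p * (q-1)) * (∑ s ∈ Finset.Ico (0:ℤ) (p * q), s)
        + q * (p-1) * (∑ s ∈ Finset.Ico (0:ℤ) (p * q), s % p)
        + p * (q-1) * (∑ s ∈ Finset.Ico (0:ℤ) (p * q), s % q)
        + (∑ s ∈ Finset.Ico (0:ℤ) (p * q), s^2)
        - (∑ s ∈ Finset.Ico (0:ℤ) (p * q), s * (s % p))
        - (∑ s ∈ Finset.Ico (0:ℤ) (p * q), s * (s % q))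
        + (∑ s ∈ Finset.Ico (0:ℤ) (p * q), (s % p) * (s % q)) := by
    simp only [Finset.sum_add_distrib, Finset.sum_sub_distrib, ← Finset.mul_sum,
      Finset.sum_const, nsmul_eq_mul, hcard]
    rw [← Finset.mul_sum]
    ring
  rw [hsplit]
  have H1 := sum_ico_id (p * q) hN.le
  have H2 := sum_ico_sq (p * q) hN.le
  have H3 := sum_ico_id p hp.le
  have H4 := sum_ico_sq p hp.le
  have H5 := sum_ico_id q hq.le
  have H6 := sum_ico_sq q hq.le
  have H7 := e_mod hp hq
  have H8 := e_mod hq hp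
  rw [mul_comm q p] at H8
  have H9 := e_smod hp hq
  have H10 := e_smod hq hp
  rw [mul_comm q p] at H10
  have H11 := e_crt hp hq hpq
  linear_combination (-6 * (q * (p-1) + p * (q-1))) * H1 + 2 * H2
    + (6 * (q * (p-1)) * q + 6 * (1 - p - q) * (∑ v ∈ Finset.Ico (0:ℤ) q, v)) * H3
    + (-2 * q) * H4
    + (6 * (p * (q-1)) * p + 3 * (1 - p - q) * p * (p-1)) * H5
    + (-2 * p) * H6
    + (12 * (q * (p-1))) * H7 + (12 * (p * (q-1))) * H8
    + (-12) * H9 + (-12) * H10 + 12 * H11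

end MordellAux

/-- Mordell's formula: for coprime positive integers `p` and `q`,
`∑_{n ∈ S} n = (1/3)pq(p−1)(q−1) + (1/12)(p−1)(q−1)(p+q+1)`, where `S` is the set of
`n` with `1 ≤ n ≤ pq − 1` of the form `n = qx + py`, `0 < x < p`, `0 < y < q`. -/
theorem sum_S
    (p q : ℤ) (hp : 0 < p) (hq : 0 < q) (hpq : IsCoprime p q) :
    12 * ∑ n ∈ (Finset.Icc (1 : ℤ) (p * q - 1)).filter
        (fun n => ∃ x y : ℤ, 0 < x ∧ x < p ∧ 0 < y ∧ y < q ∧ n = q * x + p * y), n =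
      4 * p * q * (p - 1) * (q - 1) + (p - 1) * (q - 1) * (p + q + 1) := by
  rw [stepA hp hq hpq, stepB hp hq hpq, stepC hp hq, stepD hp hq]
  exact mul_left_cancel₀ (ne_of_gt (by positivity : (0:ℤ) < p * q)) (stepE hp hq hpq)
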